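/- Let $0<s<k$, $t=k/(k-s)$, $r_i=2^{-i}$, $\ell_i=2^{-ti}$, and for each $(k+1)$-element subset $J\subset\{1,\dots,N\}$ let $X_{J,i}$ be a maximal $\ell_i$-separated subset of the scaled sphere $r_iS_J$, where $S_J=\{x\in\mathbb{R}^N:\sum_{j\in J}x_j^2=1,\ x_j=0\ (j\notin J)\}$. Set $X_J=\bigcup_i X_{J,i}\cup\{0\}$ and $X=\bigcup_J X_J$. Then the lower and upper box-counting dimensions of $X$ both equal $s=k(t-1)/t$. -/

import Mathlib

open MeasureTheory Metric Set Filter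
open scoped NNReal ENNReal Topology

/-- The minimal number of balls of radius `δ` needed to cover `X`. -/
noncomputable def coverNum {α : Type*} [PseudoMetricSpace α] (X : Set α) (δ : ℝ) : ℕ :=
  sInf {n | ∃ F : Finset α, F.card = n ∧ X ⊆ ⋃ c ∈ F, Metric.closedBall c δ}

/-- The upper box-counting (Minkowski) dimension. -/
noncomputable def upperBoxDim {α : Type*} [PseudoMetricSpace α] (X : Set α) : ℝ :=
  Filter.limsup (fun δ : ℝ => Real.log (coverNum X δ) / (-Real.log δ)) (𝓝[>] 0)

/-- The lower box-counting (Minkowski) dimension. -/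
noncomputable def lowerBoxDim {α : Type*} [PseudoMetricSpace α] (X : Set α) : ℝ :=
  Filter.liminf (fun δ : ℝ => Real.log (coverNum X δ) / (-Real.log δ)) (𝓝[>] 0)

/-- The `k`-dimensional sphere of radius `r` spanned by the coordinates in `J`:
`{x ∈ ℝ^N : ∑_{j ∈ J} x_j² = r², x_j = 0 for j ∉ J}`. -/
def sphereJ (N : ℕ) (J : Finset (Fin N)) (r : ℝ) : Set (EuclideanSpace ℝ (Fin N)) :=
  {x | ∑ j ∈ J, (x j) ^ 2 = r ^ 2 ∧ ∀ j ∉ J, x j = 0}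

lemma packing_sphere {d : ℕ} (hd : 1 ≤ d) (T : Finset (EuclideanSpace ℝ (Fin d)))
    {r ℓ : ℝ} (hℓ : 0 < ℓ) (hℓr : ℓ ≤ r)
    (hnorm : ∀ p ∈ T, ‖p‖ = r)
    (hsep : ∀ p ∈ T, ∀ q ∈ T, p ≠ q → ℓ ≤ dist p q) :
    (T.card : ℝ) ≤ 2 * d * 3 ^ (d - 1) * (r / ℓ) ^ (d - 1) := by
  haveI : NeZero d := ⟨by omega⟩
  have hh : 0 < ℓ / 2 := by linarith
  have hr : 0 < r := lt_of_lt_of_le hℓ hℓr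
  set h := ℓ / 2 with hhdef
  set x := r + h with hxdef
  set y := r - h with hydef
  have hy0 : 0 ≤ y := by simp only [hydef, hhdef]; linarith
  have hx0 : 0 < x := by simp only [hxdef]; linarith
  have hyx : y ≤ x := by simp only [hydef, hxdef]; linarith
  set v := volume (ball (0 : EuclideanSpace ℝ (Fin d)) 1) with hv
  have v0 : v ≠ 0 := (measure_ball_pos _ _ one_pos).ne'
  have vt : v ≠ ⊤ := measure_ball_lt_top.ne
  have hdisj : Set.PairwiseDisjoint ↑T (fun p : EuclideanSpace ℝ (Fin d) => ball p h) := by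
    intro p hp q hq hpq
    exact ball_disjoint_ball (by have := hsep p hp q hq hpq; simp only [hhdef]; linarith)
  have hA : volume (⋃ p ∈ T, ball p h) = (T.card : ENNReal) * (ENNReal.ofReal (h ^ d) * v) := by
    rw [measure_biUnion_finset hdisj (fun p _ => measurableSet_ball)]
    have : ∀ p ∈ T, volume (ball p h) = ENNReal.ofReal (h ^ d) * v := by
      intro p _
      rw [Measure.addHaar_ball volume p hh.le, finrank_euclideanSpace_fin]
    rw [Finset.sum_congr rfl this, Finset.sum_const, nsmul_eq_mul]
  have hdisj2 : Disjoint (⋃ p ∈ T, ball p h) (ball (0 : EuclideanSpace ℝ (Fin d)) y) := by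
    rw [Set.disjoint_left]
    intro z hz hz2
    simp only [mem_iUnion, exists_prop] at hz
    obtain ⟨p, hp, hzp⟩ := hz
    rw [mem_ball, dist_zero_right] at hz2
    have hp2 : ‖p‖ = r := hnorm p hp
    have : dist p 0 ≤ dist p z + dist z 0 := dist_triangle _ _ _
    rw [dist_zero_right, dist_zero_right, hp2, dist_comm p z] at this
    rw [mem_ball] at hzp
    simp only [hydef] at hz2
    linarith
  have hsub2 : (⋃ p ∈ T, ball p h) ∪ ball (0 : EuclideanSpace ℝ (Fin d)) y ⊆
      closedBall (0 : EuclideanSpace ℝ (Fin d)) x := by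
    rintro z (hz | hz)
    · simp only [mem_iUnion, exists_prop] at hz
      obtain ⟨p, hp, hzp⟩ := hz
      rw [mem_ball] at hzp
      rw [mem_closedBall]
      have : dist z 0 ≤ dist z p + dist p 0 := dist_triangle _ _ _
      simp only [dist_zero_right] at this ⊢
      rw [hnorm p hp] at this
      simp only [hxdef]; linarith
    · rw [mem_ball] at hz
      rw [mem_closedBall]
      simp only [hxdef]; simp only [hydef] at hz; linarith
  have hB : volume (ball (0 : EuclideanSpace ℝ (Fin d)) y) = ENNReal.ofReal (y ^ d) * v := by
    rw [Measure.addHaar_ball volume _ hy0, finrank_euclideanSpace_fin]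
  have hC : volume (closedBall (0 : EuclideanSpace ℝ (Fin d)) x)
      = ENNReal.ofReal (x ^ d) * v := by
    rw [Measure.addHaar_closedBall volume _ hx0.le, finrank_euclideanSpace_fin]
  have key : (T.card : ENNReal) * (ENNReal.ofReal (h ^ d) * v) + ENNReal.ofReal (y ^ d) * v ≤
      ENNReal.ofReal (x ^ d) * v := by
    rw [← hA, ← hB, ← hC, ← measure_union hdisj2 measurableSet_ball]
    exact measure_mono hsub2
  have key2 : (T.card : ℝ) * h ^ d + y ^ d ≤ x ^ d := by
    have h1 : (T.card : ENNReal) * ENNReal.ofReal (h ^ d) = ENNReal.ofReal (T.card * h ^ d) := by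
      rw [ENNReal.ofReal_mul (by positivity), ENNReal.ofReal_natCast]
    rw [← mul_assoc, h1, ← add_mul, ← ENNReal.ofReal_add (by positivity) (by positivity)]
      at key
    rw [ENNReal.mul_le_mul_iff_left v0 vt, ENNReal.ofReal_le_ofReal_iff (by positivity)] at key
    exact key
  have hsum : (∑ i ∈ Finset.range d, x ^ i * y ^ (d - 1 - i)) ≤ d * x ^ (d - 1) := by
    calc (∑ i ∈ Finset.range d, x ^ i * y ^ (d - 1 - i))
        ≤ ∑ _i ∈ Finset.range d, x ^ (d - 1) := by
          refine Finset.sum_le_sum fun i hi => ?_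
          rw [Finset.mem_range] at hi
          calc x ^ i * y ^ (d - 1 - i) ≤ x ^ i * x ^ (d - 1 - i) :=
                mul_le_mul_of_nonneg_left (pow_le_pow_left₀ hy0 hyx _) (by positivity)
            _ = x ^ (d - 1) := by rw [← pow_add]; congr 1; omega
      _ = d * x ^ (d - 1) := by rw [Finset.sum_const, Finset.card_range, nsmul_eq_mul]
  have hxy : x - y = ℓ := by simp only [hxdef, hydef, hhdef]; ring
  have hg := geom_sum₂_mul x y d
  rw [hxy] at hg
  have h5 : (∑ i ∈ Finset.range d, x ^ i * y ^ (d - 1 - i)) * ℓ ≤ d * x ^ (d - 1) * ℓ :=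
    mul_le_mul_of_nonneg_right hsum hℓ.le
  have key3 : (T.card : ℝ) * h ^ d ≤ d * x ^ (d - 1) * ℓ := by linarith
  have hd1 : h ^ d = h ^ (d - 1) * h := by rw [← pow_succ]; congr 1; omega
  have key4 : (T.card : ℝ) * h ^ (d - 1) ≤ 2 * d * x ^ (d - 1) := by
    have h6 : (T.card : ℝ) * h ^ (d - 1) * h ≤ 2 * d * x ^ (d - 1) * h := by
      calc (T.card : ℝ) * h ^ (d - 1) * h = (T.card : ℝ) * h ^ d := by rw [hd1]; ring
        _ ≤ d * x ^ (d - 1) * ℓ := key3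
        _ = 2 * d * x ^ (d - 1) * h := by rw [hhdef]; ring
    exact le_of_mul_le_mul_right h6 hh
  have hx3 : x ^ (d - 1) ≤ (3 * r / 2) ^ (d - 1) :=
    pow_le_pow_left₀ hx0.le (by simp only [hxdef, hhdef]; linarith) _
  have hpos : 0 < h ^ (d - 1) := by positivity
  rw [← mul_le_mul_iff_of_pos_right hpos]
  calc (T.card : ℝ) * h ^ (d - 1) ≤ 2 * d * x ^ (d - 1) := key4
    _ ≤ 2 * d * (3 * r / 2) ^ (d - 1) :=
        mul_le_mul_of_nonneg_left hx3 (by positivity)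
    _ = 2 * d * (3 * (r / ℓ) * h) ^ (d - 1) := by
        congr 2
        rw [hhdef]
        field_simp
    _ = 2 * d * 3 ^ (d - 1) * (r / ℓ) ^ (d - 1) * h ^ (d - 1) := by
        rw [mul_pow, mul_pow]; ring

lemma sum_J_eq {N n : ℕ} (J : Finset (Fin N)) (hJ : J.card = n) (g : Fin N → ℝ) :
    ∑ j ∈ J, g j = ∑ m : Fin n, g ((J.orderIsoOfFin hJ) m : Fin N) := by
  rw [← Finset.sum_coe_sort J g]
  exact (Equiv.sum_comp (J.orderIsoOfFin hJ).toEquiv (fun x : J => g (x : Fin N))).symm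

lemma sphereJ_packing {N k : ℕ} (J : Finset (Fin N)) (hJ : J.card = k + 1)
    (T : Finset (EuclideanSpace ℝ (Fin N))) {r ℓ : ℝ} (hℓ : 0 < ℓ) (hℓr : ℓ ≤ r)
    (hmem : ∀ p ∈ T, p ∈ sphereJ N J r)
    (hsep : ∀ p ∈ T, ∀ q ∈ T, p ≠ q → ℓ ≤ dist p q) :
    (T.card : ℝ) ≤ 2 * (k + 1) * 3 ^ k * (r / ℓ) ^ k := by
  classical
  have hr : 0 < r := lt_of_lt_of_le hℓ hℓr
  set e : Fin (k + 1) → Fin N := fun m => ((J.orderIsoOfFin hJ) m : Fin N) with he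
  set π : EuclideanSpace ℝ (Fin N) → EuclideanSpace ℝ (Fin (k + 1)) :=
    fun x => WithLp.toLp 2 (fun m => x (e m)) with hπ
  -- distance is preserved on points supported in J
  have hdist : ∀ p ∈ T, ∀ q ∈ T, dist (π p) (π q) = dist p q := by
    intro p hp q hq
    rw [EuclideanSpace.dist_eq, EuclideanSpace.dist_eq]
    congr 1
    simp only [Real.dist_eq, sq_abs]
    have : ∑ i : Fin N, (p i - q i) ^ 2 = ∑ j ∈ J, (p j - q j) ^ 2 := by
      refine (Finset.sum_subset J.subset_univ fun i _ hi => ?_).symm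
      rw [(hmem p hp).2 i hi, (hmem q hq).2 i hi]
      ring
    rw [this, sum_J_eq J hJ]
  have hinj : Set.InjOn π ↑T := by
    intro p hp q hq hpq
    have h0 : dist (π p) (π q) = 0 := by rw [hpq, dist_self]
    rw [hdist p hp q hq] at h0
    exact dist_eq_zero.mp h0
  have hcard : (T.image π).card = T.card := Finset.card_image_of_injOn hinj
  have hnorm : ∀ p' ∈ T.image π, ‖p'‖ = r := by
    intro p' hp'
    rw [Finset.mem_image] at hp'
    obtain ⟨p, hp, rfl⟩ := hp'
    rw [EuclideanSpace.norm_eq]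
    have hss : ∑ m : Fin (k + 1), (p (e m)) ^ 2 = r ^ 2 := by
      have h2 := (hmem p hp).1
      rw [sum_J_eq J hJ] at h2
      exact h2
    simp only [Real.norm_eq_abs, sq_abs]
    show Real.sqrt (∑ m : Fin (k + 1), (p (e m)) ^ 2) = r
    rw [hss, Real.sqrt_sq hr.le]
  have hsep' : ∀ p' ∈ T.image π, ∀ q' ∈ T.image π, p' ≠ q' → ℓ ≤ dist p' q' := by
    intro p' hp' q' hq' hne
    rw [Finset.mem_image] at hp' hq'
    obtain ⟨p, hp, rfl⟩ := hp'
    obtain ⟨q, hq, rfl⟩ := hq'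
    rw [hdist p hp q hq]
    exact hsep p hp q hq (fun h => hne (by rw [h]))
  have := packing_sphere (d := k + 1) (by omega) (T.image π) hℓ hℓr hnorm hsep'
  rw [hcard] at this
  simpa using this

lemma grid_on_sphereJ {N k : ℕ} (J : Finset (Fin N)) (hJ : J.card = k + 1)
    {r ℓ : ℝ} (hℓ : 0 < ℓ) (hr : 0 < r) (M : ℕ)
    (hMr : (k : ℝ) * ((M : ℝ) * ℓ) ^ 2 ≤ r ^ 2) :
    ∃ T : Finset (EuclideanSpace ℝ (Fin N)),
      (∀ p ∈ T, p ∈ sphereJ N J r) ∧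
      (∀ p ∈ T, ∀ q ∈ T, p ≠ q → ℓ ≤ dist p q) ∧ T.card = M ^ k := by
  classical
  set e : Fin (k + 1) → Fin N := fun m => ((J.orderIsoOfFin hJ) m : Fin N) with he
  set w : (Fin k → ℤ) → Fin (k + 1) → ℝ := fun v =>
    Fin.snoc (fun a => ℓ * v a) (Real.sqrt (r ^ 2 - ∑ a, (ℓ * v a) ^ 2)) with hw
  set x : (Fin k → ℤ) → EuclideanSpace ℝ (Fin N) := fun v =>
    WithLp.toLp 2 (fun j => if h : j ∈ J then w v ((J.orderIsoOfFin hJ).symm ⟨j, h⟩) else 0) with hx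
  have hcoord : ∀ v m, x v (e m) = w v m := by
    intro v m
    have hmemJ : e m ∈ J := ((J.orderIsoOfFin hJ) m).2
    show (if h : e m ∈ J then w v ((J.orderIsoOfFin hJ).symm ⟨e m, h⟩) else 0) = w v m
    rw [dif_pos hmemJ]
    congr 1
    have : (⟨e m, hmemJ⟩ : J) = (J.orderIsoOfFin hJ) m := Subtype.coe_eta _ _
    rw [this, OrderIso.symm_apply_apply]
  set V : Finset (Fin k → ℤ) :=
    Fintype.piFinset (fun _ : Fin k => Finset.Icc (1 : ℤ) (M : ℤ)) with hV
  have hbound : ∀ v ∈ V, ∑ a, (ℓ * (v a : ℝ)) ^ 2 ≤ r ^ 2 := by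
    intro v hv
    have h1 : ∀ a, (ℓ * (v a : ℝ)) ^ 2 ≤ ((M : ℝ) * ℓ) ^ 2 := by
      intro a
      have h2 : 1 ≤ v a ∧ v a ≤ (M : ℤ) := by
        have := Fintype.mem_piFinset.mp hv a
        rwa [Finset.mem_Icc] at this
      have h3 : (1 : ℝ) ≤ (v a : ℝ) := by exact_mod_cast h2.1
      have h4 : (v a : ℝ) ≤ (M : ℝ) := by exact_mod_cast h2.2
      have h5 : (v a : ℝ) ^ 2 ≤ (M : ℝ) ^ 2 := by nlinarith
      nlinarith [sq_nonneg ℓ, sq_nonneg ((v a : ℝ))]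
    calc ∑ a, (ℓ * (v a : ℝ)) ^ 2 ≤ ∑ _a : Fin k, ((M : ℝ) * ℓ) ^ 2 :=
          Finset.sum_le_sum fun a _ => h1 a
      _ = (k : ℝ) * ((M : ℝ) * ℓ) ^ 2 := by
          rw [Finset.sum_const, Finset.card_univ, Fintype.card_fin, nsmul_eq_mul]
      _ ≤ r ^ 2 := hMr
  have hmem : ∀ v ∈ V, x v ∈ sphereJ N J r := by
    intro v hv
    constructor
    · rw [sum_J_eq J hJ]
      have : ∀ m, (x v (e m)) ^ 2 = (w v m) ^ 2 := fun m => by rw [hcoord]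
      calc ∑ m : Fin (k + 1), (x v (e m)) ^ 2 = ∑ m : Fin (k + 1), (w v m) ^ 2 :=
            Finset.sum_congr rfl fun m _ => this m
        _ = ∑ a : Fin k, (w v a.castSucc) ^ 2 + (w v (Fin.last k)) ^ 2 :=
            Fin.sum_univ_castSucc _
        _ = ∑ a : Fin k, (ℓ * (v a : ℝ)) ^ 2 +
              (Real.sqrt (r ^ 2 - ∑ a, (ℓ * (v a : ℝ)) ^ 2)) ^ 2 := by
            simp only [hw, Fin.snoc_castSucc, Fin.snoc_last]
        _ = r ^ 2 := by
            rw [Real.sq_sqrt (by linarith [hbound v hv])]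
            ring
    · intro j hj
      show (if h : j ∈ J then w v ((J.orderIsoOfFin hJ).symm ⟨j, h⟩) else 0) = 0
      rw [dif_neg hj]
  have hsep : ∀ v ∈ V, ∀ v' ∈ V, v ≠ v' → ℓ ≤ dist (x v) (x v') := by
    intro v _ v' _ hne
    obtain ⟨a, ha⟩ : ∃ a, v a ≠ v' a := by
      by_contra hcon
      push_neg at hcon
      exact hne (funext hcon)
    rw [EuclideanSpace.dist_eq]
    have h1 : ℓ ^ 2 ≤ ∑ i : Fin N, dist (x v i) (x v' i) ^ 2 := by
      have hterm : ℓ ^ 2 ≤ dist (x v (e a.castSucc)) (x v' (e a.castSucc)) ^ 2 := by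
        rw [hcoord, hcoord]
        simp only [hw, Fin.snoc_castSucc, Real.dist_eq, sq_abs]
        have hz : (1 : ℝ) ≤ ((v a : ℝ) - (v' a : ℝ)) ^ 2 := by
          have h2 : v a - v' a ≠ 0 := sub_ne_zero.mpr ha
          have h3 : 1 ≤ |v a - v' a| := Int.one_le_abs h2
          have h4 : (1 : ℤ) ≤ (v a - v' a) ^ 2 := by nlinarith [sq_abs (v a - v' a)]
          have := (@Int.cast_le ℝ _ _ _).mpr h4
          push_cast at this
          linarith
        nlinarith [sq_nonneg ℓ]
      calc ℓ ^ 2 ≤ dist (x v (e a.castSucc)) (x v' (e a.castSucc)) ^ 2 := hterm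
        _ ≤ ∑ i : Fin N, dist (x v i) (x v' i) ^ 2 :=
            Finset.single_le_sum (f := fun i => dist (x v i) (x v' i) ^ 2)
              (fun i _ => sq_nonneg _) (Finset.mem_univ _)
    calc ℓ = Real.sqrt (ℓ ^ 2) := (Real.sqrt_sq hℓ.le).symm
      _ ≤ _ := Real.sqrt_le_sqrt h1
  have hinj : Set.InjOn x ↑V := by
    intro v hv v' hv' hxx
    funext a
    have h1 : x v (e a.castSucc) = x v' (e a.castSucc) := by rw [hxx]
    rw [hcoord, hcoord] at h1
    simp only [hw, Fin.snoc_castSucc] at h1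
    have := mul_left_cancel₀ hℓ.ne' h1
    exact_mod_cast this
  refine ⟨V.image x, ?_, ?_, ?_⟩
  · intro p hp
    obtain ⟨v, hv, rfl⟩ := Finset.mem_image.mp hp
    exact hmem v hv
  · intro p hp q hq hpq
    obtain ⟨v, hv, rfl⟩ := Finset.mem_image.mp hp
    obtain ⟨v', hv', rfl⟩ := Finset.mem_image.mp hq
    exact hsep v hv v' hv' (fun h => hpq (by rw [h]))
  · rw [Finset.card_image_of_injOn hinj, hV, Fintype.card_piFinset]
    simp [Int.card_Icc]

lemma coverNum_le {α : Type*} [PseudoMetricSpace α] {X : Set α} {δ : ℝ} (F : Finset α)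
    (h : X ⊆ ⋃ c ∈ F, Metric.closedBall c δ) : coverNum X δ ≤ F.card :=
  Nat.sInf_le ⟨F, rfl, h⟩

lemma le_coverNum {α : Type*} [PseudoMetricSpace α] {X : Set α} {δ : ℝ} (S : Finset α)
    (hS : ↑S ⊆ X) (hsep : ∀ p ∈ S, ∀ q ∈ S, p ≠ q → 2 * δ < dist p q)
    (hne : ∃ F : Finset α, X ⊆ ⋃ c ∈ F, Metric.closedBall c δ) :
    S.card ≤ coverNum X δ := by
  classical
  obtain ⟨F0, hF0⟩ := hne
  have hmem : coverNum X δ ∈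
      {n | ∃ F : Finset α, F.card = n ∧ X ⊆ ⋃ c ∈ F, Metric.closedBall c δ} :=
    Nat.sInf_mem ⟨F0.card, F0, rfl, hF0⟩
  obtain ⟨F, hcard, hcov⟩ := hmem
  rw [← hcard]
  have hc : ∀ p ∈ S, ∃ c ∈ F, p ∈ Metric.closedBall c δ := by
    intro p hp
    have := hcov (hS hp)
    simpa using this
  choose! c hcF hcd using hc
  refine Finset.card_le_card_of_injOn c (fun p hp => hcF p hp) ?_
  intro p hp q hq hpq
  by_contra hne2
  rw [Finset.mem_coe] at hp hq
  have h2 : dist p (c p) ≤ δ := mem_closedBall.mp (hcd p hp)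
  have h3 : dist (c p) q ≤ δ := by
    rw [hpq, dist_comm]
    exact mem_closedBall.mp (hcd q hq)
  have h4 := dist_triangle p (c p) q
  have := hsep p hp q hq hne2
  linarith

lemma exists_maximal_separated {α : Type*} [PseudoMetricSpace α] (F : Finset α) {δ : ℝ}
    (hδ : 0 ≤ δ) :
    ∃ W, W ⊆ F ∧ (∀ p ∈ W, ∀ q ∈ W, p ≠ q → δ ≤ dist p q) ∧
      ∀ x ∈ F, ∃ w ∈ W, dist x w ≤ δ := by
  classical
  set 𝒮 := F.powerset.filter (fun W => ∀ p ∈ W, ∀ q ∈ W, p ≠ q → δ ≤ dist p q) with h𝒮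
  have hne : 𝒮.Nonempty := ⟨∅, by simp [h𝒮]⟩
  obtain ⟨W, hW, hWmax⟩ := Finset.exists_max_image 𝒮 Finset.card hne
  rw [h𝒮, Finset.mem_filter, Finset.mem_powerset] at hW
  refine ⟨W, hW.1, hW.2, ?_⟩
  intro x hx
  by_contra hcon
  push_neg at hcon
  have hxW : x ∉ W := fun hxW => by
    have := hcon x hxW
    rw [dist_self] at this
    linarith
  have hins : insert x W ∈ 𝒮 := by
    rw [h𝒮, Finset.mem_filter, Finset.mem_powerset]
    refine ⟨Finset.insert_subset hx hW.1, ?_⟩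
    intro p hp q hq hpq
    rcases Finset.mem_insert.mp hp with rfl | hp'
    · rcases Finset.mem_insert.mp hq with rfl | hq'
      · exact absurd rfl hpq
      · exact le_of_lt (hcon q hq')
    · rcases Finset.mem_insert.mp hq with rfl | hq'
      · rw [dist_comm]; exact le_of_lt (hcon p hp')
      · exact hW.2 p hp' q hq' hpq
  have := hWmax _ hins
  rw [Finset.card_insert_of_notMem hxW] at this
  omega

lemma exists_cover {N : ℕ} {X : Set (EuclideanSpace ℝ (Fin N))}
    (hX : X ⊆ Metric.closedBall 0 1) {δ : ℝ} (hδ : 0 < δ) :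
    ∃ F : Finset (EuclideanSpace ℝ (Fin N)), X ⊆ ⋃ c ∈ F, Metric.closedBall c δ := by
  classical
  have htb : TotallyBounded X :=
    (isCompact_closedBall (0 : EuclideanSpace ℝ (Fin N)) 1).totallyBounded.subset hX
  obtain ⟨t, htf, hts⟩ := (Metric.totallyBounded_iff.mp htb) δ hδ
  refine ⟨htf.toFinset, hts.trans ?_⟩
  intro z hz
  simp only [Set.mem_iUnion, exists_prop] at hz ⊢
  obtain ⟨y, hy, hzy⟩ := hz
  exact ⟨y, by simpa using hy, le_of_lt (Metric.mem_ball.mp hzy)⟩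

lemma norm_of_mem_sphereJ {N : ℕ} {J : Finset (Fin N)} {r : ℝ} (hr : 0 ≤ r)
    {x : EuclideanSpace ℝ (Fin N)} (hx : x ∈ sphereJ N J r) : ‖x‖ = r := by
  rw [EuclideanSpace.norm_eq]
  have h1 : ∑ i : Fin N, ‖x i‖ ^ 2 = r ^ 2 := by
    calc ∑ i : Fin N, ‖x i‖ ^ 2 = ∑ i : Fin N, (x i) ^ 2 := by
          simp [Real.norm_eq_abs, sq_abs]
      _ = ∑ j ∈ J, (x j) ^ 2 :=
          (Finset.sum_subset J.subset_univ (fun i _ hi => by rw [hx.2 i hi]; ring)).symm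
      _ = r ^ 2 := hx.1
  rw [h1, Real.sqrt_sq hr]

lemma ev_small (a : ℝ) (ha : 0 < a) : ∀ᶠ δ in 𝓝[>] (0 : ℝ), 0 < δ ∧ δ < a := by
  have h1 : Set.Ioo (0:ℝ) a ∈ 𝓝[>] (0:ℝ) := Ioo_mem_nhdsGT_of_mem ⟨le_refl 0, ha⟩
  filter_upwards [h1] with δ hδ
  exact ⟨hδ.1, hδ.2⟩

lemma tendsto_u (t : ℝ) (ht : 0 < t) :
    Tendsto (fun δ : ℝ => Real.logb 2 (1 / (3 * δ)) / t) (𝓝[>] (0:ℝ)) atTop := by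
  have h3δ : Tendsto (fun δ : ℝ => 3 * δ) (𝓝[>] (0:ℝ)) (𝓝[>] (0:ℝ)) := by
    apply tendsto_nhdsWithin_of_tendsto_nhds_of_eventually_within
    · have h1 : Tendsto (fun δ : ℝ => 3 * δ) (𝓝 (0:ℝ)) (𝓝 (3 * 0 : ℝ)) :=
        (continuous_const.mul continuous_id).tendsto (0:ℝ)
      rw [mul_zero] at h1
      exact h1.mono_left nhdsWithin_le_nhds
    · filter_upwards [self_mem_nhdsWithin] with δ hδ
      exact mul_pos (by norm_num : (0:ℝ) < 3) hδ
  have hlog : Tendsto (fun δ : ℝ => Real.log (3 * δ)) (𝓝[>] (0:ℝ)) atBot :=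
    Real.tendsto_log_nhdsGT_zero.comp h3δ
  have hneg : Tendsto (fun δ : ℝ => -Real.log (3 * δ)) (𝓝[>] (0:ℝ)) atTop :=
    tendsto_neg_atBot_atTop.comp hlog
  have hdiv : Tendsto (fun δ : ℝ => -Real.log (3 * δ) / (Real.log 2 * t)) (𝓝[>] (0:ℝ)) atTop :=
    hneg.atTop_div_const (mul_pos (Real.log_pos one_lt_two) ht)
  refine hdiv.congr' ?_
  filter_upwards [self_mem_nhdsWithin] with δ hδ
  have hδ' : (0:ℝ) < δ := hδ
  have h30 : (3:ℝ) * δ ≠ 0 := (mul_pos (by norm_num : (0:ℝ) < 3) hδ').ne'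
  rw [Real.logb, Real.log_div one_ne_zero h30, Real.log_one]
  field_simp
  try ring

set_option maxHeartbeats 1000000 in
lemma cover_lower (N k : ℕ) (hk : 1 ≤ k) (s t : ℝ) (hs0 : 0 < s)
    (ht1 : 1 < t) (hts : (t - 1) * k = s * t)
    (XJ : Finset (Fin N) → ℕ → Finset (EuclideanSpace ℝ (Fin N)))
    (J₀ : Finset (Fin N)) (hJ₀ : J₀.card = k + 1)
    (hsepJ : ∀ i : ℕ, 1 ≤ i →
      ∀ p ∈ XJ J₀ i, ∀ q ∈ XJ J₀ i, p ≠ q → (2 : ℝ) ^ (-(t * i)) ≤ dist p q)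
    (hmaxJ : ∀ i : ℕ, 1 ≤ i →
      ∀ T : Finset (EuclideanSpace ℝ (Fin N)),
        (∀ p ∈ T, p ∈ sphereJ N J₀ ((2 : ℝ) ^ (-(i : ℝ)))) →
        (∀ p ∈ T, ∀ q ∈ T, p ≠ q → (2 : ℝ) ^ (-(t * i)) ≤ dist p q) →
        T.card ≤ (XJ J₀ i).card)
    (X : Set (EuclideanSpace ℝ (Fin N)))
    (hXsub : ∀ i : ℕ, 1 ≤ i → ↑(XJ J₀ i) ⊆ X)
    (hXball : X ⊆ Metric.closedBall 0 1) :
    ∃ c : ℝ, 0 < c ∧ ∀ᶠ δ in 𝓝[>] (0:ℝ), c * δ ^ (-s) ≤ (coverNum X δ : ℝ) := by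
  have ht0 : 0 < t := by linarith
  have hk0 : (0:ℝ) < k := by exact_mod_cast hk
  refine ⟨(2:ℝ) ^ (-(s*t)) * 3 ^ (-s) / (2*k) ^ k, by positivity, ?_⟩
  have hev := (tendsto_u t ht0).eventually_ge_atTop
    (max 1 (1 + Real.logb 2 (2*k) / (t-1)))
  filter_upwards [hev, self_mem_nhdsWithin] with δ hu hδmem
  have hδ : (0:ℝ) < δ := hδmem
  set u := Real.logb 2 (1 / (3 * δ)) / t with hudef
  have hu1 : (1:ℝ) ≤ u := le_trans (le_max_left _ _) hu
  have hu2 : 1 + Real.logb 2 (2*k) / (t-1) ≤ u := le_trans (le_max_right _ _) hu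
  set i := Nat.floor u with hidef
  have hi1 : 1 ≤ i := Nat.le_floor (by exact_mod_cast hu1)
  have hiu : (i:ℝ) ≤ u := Nat.floor_le (by linarith)
  have hui : u - 1 ≤ (i:ℝ) := (Nat.sub_one_lt_floor u).le
  -- ℓ_i ≥ 3δ
  have hlogb : t * (i:ℝ) ≤ Real.logb 2 (1 / (3 * δ)) := by
    have := mul_le_mul_of_nonneg_left hiu ht0.le
    rw [hudef] at this
    calc t * (i:ℝ) ≤ t * (Real.logb 2 (1 / (3 * δ)) / t) := this
      _ = Real.logb 2 (1 / (3 * δ)) := by field_simp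
  have h13δ : (0:ℝ) < 1 / (3 * δ) := by positivity
  have hpow2 : (2:ℝ) ^ (t * (i:ℝ)) ≤ 1 / (3 * δ) := by
    rw [← Real.rpow_logb (b := 2) (by norm_num) (by norm_num) h13δ]
    exact Real.rpow_le_rpow_of_exponent_le one_le_two hlogb
  have hℓ3δ : 3 * δ ≤ (2:ℝ) ^ (-(t * (i:ℝ))) := by
    rw [Real.rpow_neg (by norm_num), inv_eq_one_div, le_div_iff₀ (Real.rpow_pos_of_pos two_pos _)]
    calc 3 * δ * (2:ℝ) ^ (t * (i:ℝ)) ≤ 3 * δ * (1 / (3 * δ)) :=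
          mul_le_mul_of_nonneg_left hpow2 (by positivity)
      _ = 1 := by field_simp
  -- 2k ≤ 2^((t-1) i)
  have hA : 2 * (k:ℝ) ≤ (2:ℝ) ^ ((t-1) * (i:ℝ)) := by
    have h1 : Real.logb 2 (2*k) ≤ (t-1) * (u - 1) := by
      have h2 : Real.logb 2 (2*k) / (t-1) ≤ u - 1 := by linarith
      have htne : t - 1 ≠ 0 := by linarith
      calc Real.logb 2 (2*k) = (t-1) * (Real.logb 2 (2*k) / (t-1)) := by field_simp
        _ ≤ (t-1) * (u - 1) := mul_le_mul_of_nonneg_left h2 (by linarith)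
    have h3 : (t-1) * (u-1) ≤ (t-1) * (i:ℝ) := mul_le_mul_of_nonneg_left hui (by linarith)
    calc 2 * (k:ℝ) = (2:ℝ) ^ (Real.logb 2 (2*k)) :=
          (Real.rpow_logb (by norm_num) (by norm_num) (by positivity)).symm
      _ ≤ (2:ℝ) ^ ((t-1) * (i:ℝ)) :=
          Real.rpow_le_rpow_of_exponent_le one_le_two (by linarith)
  set M := Nat.floor ((2:ℝ) ^ ((t-1) * (i:ℝ)) / k) with hMdef
  have hx2 : (2:ℝ) ≤ (2:ℝ) ^ ((t-1) * (i:ℝ)) / k := by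
    rw [le_div_iff₀ hk0]; linarith
  have hMle : (M:ℝ) ≤ (2:ℝ) ^ ((t-1) * (i:ℝ)) / k := Nat.floor_le (by linarith)
  have hMge : (2:ℝ) ^ ((t-1) * (i:ℝ)) / (2*k) ≤ (M:ℝ) := by
    have h1 : (2:ℝ) ^ ((t-1) * (i:ℝ)) / k - 1 < (M:ℝ) := Nat.sub_one_lt_floor _
    have h2 : (2:ℝ) ^ ((t-1) * (i:ℝ)) / (2*k) ≤ (2:ℝ) ^ ((t-1) * (i:ℝ)) / k - 1 := by
      have hkne : (k:ℝ) ≠ 0 := hk0.ne'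
      have he : (2:ℝ) ^ ((t-1) * (i:ℝ)) / (2*k) = ((2:ℝ) ^ ((t-1) * (i:ℝ)) / k) / 2 := by
        rw [div_div, mul_comm (k:ℝ) 2]
      rw [he]
      linarith
    linarith
  -- grid
  have hrpos : (0:ℝ) < (2:ℝ) ^ (-(i:ℝ)) := Real.rpow_pos_of_pos two_pos _
  have hℓpos : (0:ℝ) < (2:ℝ) ^ (-(t * (i:ℝ))) := Real.rpow_pos_of_pos two_pos _
  have hMℓ : (M:ℝ) * (2:ℝ) ^ (-(t * (i:ℝ))) ≤ (2:ℝ) ^ (-(i:ℝ)) / k := by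
    have h1 : (M:ℝ) * (2:ℝ) ^ (-(t * (i:ℝ))) ≤
        ((2:ℝ) ^ ((t-1) * (i:ℝ)) / k) * (2:ℝ) ^ (-(t * (i:ℝ))) :=
      mul_le_mul_of_nonneg_right hMle hℓpos.le
    have h2 : (2:ℝ) ^ ((t-1) * (i:ℝ)) * (2:ℝ) ^ (-(t * (i:ℝ))) = (2:ℝ) ^ (-(i:ℝ)) := by
      rw [← Real.rpow_add two_pos]
      congr 1
      ring
    calc (M:ℝ) * (2:ℝ) ^ (-(t * (i:ℝ))) ≤
        ((2:ℝ) ^ ((t-1) * (i:ℝ)) / k) * (2:ℝ) ^ (-(t * (i:ℝ))) := h1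
      _ = (2:ℝ) ^ (-(i:ℝ)) / k := by rw [div_mul_eq_mul_div, h2]
  have hMr : (k:ℝ) * ((M:ℝ) * (2:ℝ) ^ (-(t * (i:ℝ)))) ^ 2 ≤ ((2:ℝ) ^ (-(i:ℝ))) ^ 2 := by
    have hM0 : (0:ℝ) ≤ (M:ℝ) * (2:ℝ) ^ (-(t * (i:ℝ))) := by positivity
    have h1 : ((M:ℝ) * (2:ℝ) ^ (-(t * (i:ℝ)))) ^ 2 ≤ ((2:ℝ) ^ (-(i:ℝ)) / k) ^ 2 := by
      apply pow_le_pow_left₀ hM0 hMℓ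
    have h2 : (k:ℝ) * ((2:ℝ) ^ (-(i:ℝ)) / k) ^ 2 ≤ ((2:ℝ) ^ (-(i:ℝ))) ^ 2 := by
      have hk1 : (1:ℝ) ≤ (k:ℝ) := by exact_mod_cast hk
      rw [div_pow, ← mul_div_assoc, div_le_iff₀ (by positivity : (0:ℝ) < (k:ℝ) ^ 2)]
      nlinarith [mul_nonneg (mul_nonneg hk0.le (sq_nonneg ((2:ℝ) ^ (-(i:ℝ)))))
        (sub_nonneg.mpr hk1)]
    calc (k:ℝ) * ((M:ℝ) * (2:ℝ) ^ (-(t * (i:ℝ)))) ^ 2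
        ≤ (k:ℝ) * ((2:ℝ) ^ (-(i:ℝ)) / k) ^ 2 := mul_le_mul_of_nonneg_left h1 hk0.le
      _ ≤ ((2:ℝ) ^ (-(i:ℝ))) ^ 2 := h2
  obtain ⟨T, hT1, hT2, hT3⟩ := grid_on_sphereJ J₀ hJ₀ hℓpos hrpos M hMr
  have hTcard : M ^ k ≤ (XJ J₀ i).card := by
    rw [← hT3]
    exact hmaxJ i hi1 T hT1 hT2
  -- coverNum lower
  have hcover : ((XJ J₀ i).card : ℝ) ≤ (coverNum X δ : ℝ) := by
    have := le_coverNum (XJ J₀ i) (hXsub i hi1)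
      (fun p hp q hq hpq => lt_of_lt_of_le (by linarith [hsepJ i hi1 p hp q hq hpq] :
        2 * δ < (2:ℝ) ^ (-(t * (i:ℝ)))) (hsepJ i hi1 p hp q hq hpq))
      (exists_cover hXball hδ)
    exact_mod_cast this
  have hMk : ((M:ℝ)) ^ k ≤ (coverNum X δ : ℝ) := by
    calc ((M:ℝ)) ^ k = ((M ^ k : ℕ) : ℝ) := by push_cast; ring
      _ ≤ ((XJ J₀ i).card : ℝ) := by exact_mod_cast hTcard
      _ ≤ _ := hcover
  have hexp : s * Real.logb 2 (1 / (3 * δ)) - s * t ≤ (t - 1) * (i:ℝ) * (k:ℝ) := by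
    have h1 : t * u = Real.logb 2 (1 / (3 * δ)) := by
      rw [hudef]
      field_simp
    have h2 : (t - 1) * (i:ℝ) * (k:ℝ) = s * (t * (i:ℝ)) := by
      calc (t - 1) * (i:ℝ) * (k:ℝ) = ((t - 1) * (k:ℝ)) * (i:ℝ) := by ring
        _ = (s * t) * (i:ℝ) := by rw [hts]
        _ = s * (t * (i:ℝ)) := by ring
    rw [h2, ← h1]
    have h3 : t * (u - 1) ≤ t * (i:ℝ) := mul_le_mul_of_nonneg_left hui ht0.le
    have h4 : s * (t * (u - 1)) ≤ s * (t * (i:ℝ)) := mul_le_mul_of_nonneg_left h3 hs0.le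
    ring_nf at h4 ⊢
    linarith
  have hceq : (2:ℝ) ^ (-(s*t)) * 3 ^ (-s) / (2*(k:ℝ)) ^ k * δ ^ (-s)
      = (2:ℝ) ^ (s * Real.logb 2 (1 / (3 * δ)) - s * t) / (2*(k:ℝ)) ^ k := by
    have h1 : (3:ℝ) ^ (-s) * δ ^ (-s) = (1 / (3 * δ)) ^ s := by
      rw [← Real.mul_rpow (by norm_num : (0:ℝ) ≤ 3) hδ.le,
        Real.rpow_neg (by positivity : (0:ℝ) ≤ 3*δ), one_div,
        Real.inv_rpow (by positivity : (0:ℝ) ≤ 3*δ)]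
    have h2 : (1 / (3 * δ)) ^ s = (2:ℝ) ^ (s * Real.logb 2 (1 / (3 * δ))) := by
      rw [mul_comm s, Real.rpow_mul (by norm_num : (0:ℝ) ≤ 2),
        Real.rpow_logb (by norm_num) (by norm_num) h13δ]
    have h3 : (2:ℝ) ^ (s * Real.logb 2 (1 / (3 * δ)) - s * t)
        = (2:ℝ) ^ (s * Real.logb 2 (1 / (3 * δ))) * (2:ℝ) ^ (-(s*t)) := by
      rw [← Real.rpow_add two_pos]
      congr 1
    rw [h3, ← h2, ← h1]
    ring
  calc (2:ℝ) ^ (-(s*t)) * 3 ^ (-s) / (2*(k:ℝ)) ^ k * δ ^ (-s)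
      = (2:ℝ) ^ (s * Real.logb 2 (1 / (3 * δ)) - s * t) / (2*(k:ℝ)) ^ k := hceq
    _ ≤ (2:ℝ) ^ ((t - 1) * (i:ℝ) * (k:ℝ)) / (2*(k:ℝ)) ^ k := by
        rw [div_le_div_iff_of_pos_right (by positivity : (0:ℝ) < (2*(k:ℝ)) ^ k)]
        exact Real.rpow_le_rpow_of_exponent_le one_le_two hexp
    _ = ((2:ℝ) ^ ((t - 1) * (i:ℝ))) ^ k / (2*(k:ℝ)) ^ k := by
        rw [← Real.rpow_natCast ((2:ℝ) ^ ((t-1) * (i:ℝ))) k,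
          ← Real.rpow_mul (by norm_num : (0:ℝ) ≤ 2)]
    _ = ((2:ℝ) ^ ((t - 1) * (i:ℝ)) / (2*(k:ℝ))) ^ k := (div_pow _ _ _).symm
    _ ≤ (M:ℝ) ^ k := pow_le_pow_left₀ (by positivity) hMge k
    _ ≤ (coverNum X δ : ℝ) := hMk

set_option maxHeartbeats 1000000 in
lemma cover_upper (N k : ℕ) (hk : 1 ≤ k) (s t : ℝ) (hs0 : 0 < s) (hsk : s < k)
    (ht1 : 1 < t) (hts : (t - 1) * k = s * t) (htk : t * ((k:ℝ) - s) = k)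
    (XJ : Finset (Fin N) → ℕ → Finset (EuclideanSpace ℝ (Fin N)))
    (hsub : ∀ J : Finset (Fin N), J.card = k + 1 → ∀ i : ℕ, 1 ≤ i →
      ∀ p ∈ XJ J i, p ∈ sphereJ N J ((2 : ℝ) ^ (-(i : ℝ))))
    (hsep : ∀ J : Finset (Fin N), J.card = k + 1 → ∀ i : ℕ, 1 ≤ i →
      ∀ p ∈ XJ J i, ∀ q ∈ XJ J i, p ≠ q → (2 : ℝ) ^ (-(t * i)) ≤ dist p q)
    (X : Set (EuclideanSpace ℝ (Fin N)))
    (hXdef : X = ⋃ J ∈ {J : Finset (Fin N) | J.card = k + 1},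
      ((⋃ i ∈ {i : ℕ | 1 ≤ i}, (XJ J i : Set (EuclideanSpace ℝ (Fin N)))) ∪ {0})) :
    ∃ B : ℝ, 0 < B ∧ ∀ᶠ δ in 𝓝[>] (0:ℝ),
      (coverNum X δ : ℝ) ≤ B * (1 + Real.logb 2 δ⁻¹) * δ ^ (-s) := by
  classical
  set 𝒥 : Finset (Finset (Fin N)) :=
    Finset.univ.filter (fun J : Finset (Fin N) => J.card = k + 1) with h𝒥
  set C : ℝ := 2 * ((k:ℝ) + 1) * 3 ^ k with hC
  have hC0 : 0 < C := by positivity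
  set G : ℝ := (𝒥.card : ℝ) with hG
  have hG0 : (0:ℝ) ≤ G := Nat.cast_nonneg _
  refine ⟨1 + G * C, by positivity, ?_⟩
  filter_upwards [ev_small 1 one_pos] with δ hδ01
  obtain ⟨hδ, hδ1⟩ := hδ01
  have hδinv : 1 < δ⁻¹ := (one_lt_inv₀ hδ).mpr hδ1
  set L : ℝ := Real.logb 2 δ⁻¹ with hL
  have hL0 : 0 < L := Real.logb_pos one_lt_two hδinv
  set m : ℕ := Nat.floor L with hm
  have hmL : (m:ℝ) ≤ L := Nat.floor_le hL0.le
  have h2L : (2:ℝ) ^ L = δ⁻¹ := Real.rpow_logb two_pos (by norm_num) (by positivity)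
  -- choose maximal separated subsets
  have hWex : ∀ J : Finset (Fin N), ∀ j : ℕ,
      ∃ W, W ⊆ XJ J j ∧ (∀ p ∈ W, ∀ q ∈ W, p ≠ q → δ ≤ dist p q) ∧
        ∀ x ∈ XJ J j, ∃ w ∈ W, dist x w ≤ δ :=
    fun J j => exists_maximal_separated (XJ J j) hδ.le
  choose W hW1 hW2 hW3 using hWex
  set F : Finset (EuclideanSpace ℝ (Fin N)) :=
    insert 0 (𝒥.biUnion (fun J => (Finset.Icc 1 m).biUnion (fun j => W J j))) with hF
  -- coverage
  have hcov : X ⊆ ⋃ c ∈ F, Metric.closedBall c δ := by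
    intro x hx
    rw [hXdef] at hx
    simp only [Set.mem_iUnion, Set.mem_setOf_eq, Set.mem_union,
      Set.mem_singleton_iff, Finset.mem_coe, exists_prop] at hx
    obtain ⟨J, hJcard, hx'⟩ := hx
    have hJ𝒥 : J ∈ 𝒥 := by
      rw [h𝒥, Finset.mem_filter]
      exact ⟨Finset.mem_univ _, hJcard⟩
    rcases hx' with hx' | rfl
    · obtain ⟨j, hj1, hxj⟩ := hx'
      have hxs : x ∈ sphereJ N J ((2:ℝ) ^ (-(j:ℝ))) := hsub J hJcard j hj1 x hxj
      by_cases hjm : j ≤ m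
      · obtain ⟨w, hw, hxw⟩ := hW3 J j x hxj
        simp only [Set.mem_iUnion, exists_prop]
        refine ⟨w, ?_, hxw⟩
        rw [hF, Finset.mem_insert]
        right
        rw [Finset.mem_biUnion]
        exact ⟨J, hJ𝒥, Finset.mem_biUnion.mpr ⟨j, Finset.mem_Icc.mpr ⟨hj1, hjm⟩, hw⟩⟩
      · -- small sphere: covered by ball at 0
        push_neg at hjm
        have hnx : ‖x‖ = (2:ℝ) ^ (-(j:ℝ)) :=
          norm_of_mem_sphereJ (Real.rpow_pos_of_pos two_pos _).le hxs
        have hLj : L ≤ (j:ℝ) := by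
          have h1 : L < (m:ℝ) + 1 := Nat.lt_floor_add_one L
          have h2 : (m:ℝ) + 1 ≤ (j:ℝ) := by exact_mod_cast hjm
          linarith
        have hje : (2:ℝ) ^ (-(j:ℝ)) ≤ δ := by
          have h3 : δ⁻¹ ≤ (2:ℝ) ^ (j:ℝ) := by
            rw [← h2L]
            exact Real.rpow_le_rpow_of_exponent_le one_le_two hLj
          have h4 : ((2:ℝ) ^ (j:ℝ))⁻¹ ≤ δ := by
            rw [← inv_inv δ]
            exact inv_anti₀ (by positivity) h3
          rw [Real.rpow_neg (by norm_num)]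
          exact h4
        simp only [Set.mem_iUnion, exists_prop]
        refine ⟨0, ?_, ?_⟩
        · rw [hF]; exact Finset.mem_insert_self _ _
        · rw [mem_closedBall, dist_zero_right, hnx]
          exact hje
    · simp only [Set.mem_iUnion, exists_prop]
      refine ⟨0, by rw [hF]; exact Finset.mem_insert_self _ _, ?_⟩
      rw [mem_closedBall, dist_self]
      exact hδ.le
  -- cardinality of each W J j
  have hWbound : ∀ J ∈ 𝒥, ∀ j ∈ Finset.Icc 1 m, ((W J j).card : ℝ) ≤ C * δ ^ (-s) := by
    intro J hJ𝒥 j hj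
    rw [Finset.mem_Icc] at hj
    obtain ⟨hj1, hjm⟩ := hj
    have hJcard : J.card = k + 1 := by
      rw [h𝒥, Finset.mem_filter] at hJ𝒥
      exact hJ𝒥.2
    have hjL : (j:ℝ) ≤ L := le_trans (by exact_mod_cast hjm) hmL
    have hδrj : δ ≤ (2:ℝ) ^ (-(j:ℝ)) := by
      have h3 : (2:ℝ) ^ (j:ℝ) ≤ δ⁻¹ := by
        rw [← h2L]
        exact Real.rpow_le_rpow_of_exponent_le one_le_two hjL
      have h4 : δ ≤ ((2:ℝ) ^ (j:ℝ))⁻¹ := by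
        have h5 := inv_anti₀ (by positivity : (0:ℝ) < 2 ^ (j:ℝ)) h3
        rwa [inv_inv] at h5
      rw [Real.rpow_neg (by norm_num)]
      exact h4
    have hPdel : (1:ℝ) ≤ δ ^ (-s) := by
      rw [Real.rpow_neg hδ.le]
      rw [one_le_inv_iff₀]
      constructor
      · positivity
      · calc δ ^ s ≤ 1 ^ s := Real.rpow_le_rpow hδ.le hδ1.le hs0.le
          _ = 1 := Real.one_rpow s
    by_cases h2tj : (2:ℝ) ^ (t * (j:ℝ)) ≤ δ⁻¹
    · -- use the cardinality of XJ J j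
      have hℓr : (2:ℝ) ^ (-(t * (j:ℝ))) ≤ (2:ℝ) ^ (-(j:ℝ)) := by
        apply Real.rpow_le_rpow_of_exponent_le one_le_two
        have : (1:ℝ) ≤ t := ht1.le
        nlinarith [Nat.cast_nonneg (α := ℝ) j]
      have hXJb : ((XJ J j).card : ℝ) ≤ C * (2:ℝ) ^ (s * (t * (j:ℝ))) := by
        have h5 := sphereJ_packing J hJcard (XJ J j)
          (Real.rpow_pos_of_pos two_pos (-(t * (j:ℝ)))) hℓr
          (hsub J hJcard j hj1) (hsep J hJcard j hj1)
        have h6 : (2:ℝ) ^ (-(j:ℝ)) / (2:ℝ) ^ (-(t * (j:ℝ))) = (2:ℝ) ^ ((t-1) * (j:ℝ)) := by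
          rw [← Real.rpow_sub two_pos]
          congr 1
          ring
        have h7 : ((2:ℝ) ^ ((t-1) * (j:ℝ))) ^ k = (2:ℝ) ^ (s * (t * (j:ℝ))) := by
          rw [← Real.rpow_natCast ((2:ℝ) ^ ((t-1) * (j:ℝ))) k,
            ← Real.rpow_mul (by norm_num : (0:ℝ) ≤ 2)]
          congr 1
          linear_combination (j:ℝ) * hts
        rw [h6, h7] at h5
        exact h5
      have h8 : (2:ℝ) ^ (s * (t * (j:ℝ))) ≤ δ ^ (-s) := by
        have h9 : (2:ℝ) ^ (s * (t * (j:ℝ))) = ((2:ℝ) ^ (t * (j:ℝ))) ^ s := by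
          rw [← Real.rpow_mul (by norm_num : (0:ℝ) ≤ 2)]
          congr 1
          ring
        rw [h9, Real.rpow_neg hδ.le, ← Real.inv_rpow hδ.le]
        exact Real.rpow_le_rpow (by positivity) h2tj hs0.le
      calc ((W J j).card : ℝ) ≤ ((XJ J j).card : ℝ) := by
            exact_mod_cast Finset.card_le_card (hW1 J j)
        _ ≤ C * (2:ℝ) ^ (s * (t * (j:ℝ))) := hXJb
        _ ≤ C * δ ^ (-s) := mul_le_mul_of_nonneg_left h8 hC0.le
    · -- pack W J j directly at scale δ
      push_neg at h2tj
      have hWmem : ∀ p ∈ W J j, p ∈ sphereJ N J ((2:ℝ) ^ (-(j:ℝ))) :=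
        fun p hp => hsub J hJcard j hj1 p (hW1 J j hp)
      have h5 := sphereJ_packing J hJcard (W J j) hδ hδrj hWmem (hW2 J j)
      have haj : L ≤ t * (j:ℝ) := by
        have h6 : L < Real.logb 2 ((2:ℝ) ^ (t * (j:ℝ))) :=
          Real.logb_lt_logb one_lt_two (by positivity) h2tj
        rw [Real.logb_rpow two_pos (by norm_num)] at h6
        exact h6.le
      have h7 : (2:ℝ) ^ (-(j:ℝ)) / δ = (2:ℝ) ^ (L - (j:ℝ)) := by
        rw [div_eq_mul_inv, ← h2L, ← Real.rpow_add two_pos]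
        congr 1
        ring
      have h8 : ((2:ℝ) ^ (L - (j:ℝ))) ^ k ≤ δ ^ (-s) := by
        have h9 : ((2:ℝ) ^ (L - (j:ℝ))) ^ k = (2:ℝ) ^ ((L - (j:ℝ)) * k) := by
          rw [← Real.rpow_natCast ((2:ℝ) ^ (L - (j:ℝ))) k,
            ← Real.rpow_mul (by norm_num : (0:ℝ) ≤ 2)]
        have h10 : (L - (j:ℝ)) * k ≤ L * s := by
          have h11 : L * ((k:ℝ) - s) ≤ (t * (j:ℝ)) * ((k:ℝ) - s) :=
            mul_le_mul_of_nonneg_right haj (by linarith)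
          have h12 : (t * (j:ℝ)) * ((k:ℝ) - s) = (j:ℝ) * k := by
            linear_combination (j:ℝ) * htk
          nlinarith [hjL]
        have h13 : (2:ℝ) ^ (L * s) = δ ^ (-s) := by
          rw [Real.rpow_mul (by norm_num : (0:ℝ) ≤ 2), h2L,
            Real.rpow_neg hδ.le, ← Real.inv_rpow hδ.le]
        rw [h9, ← h13]
        exact Real.rpow_le_rpow_of_exponent_le one_le_two h10
      calc ((W J j).card : ℝ)
          ≤ C * ((2:ℝ) ^ (-(j:ℝ)) / δ) ^ k := h5
        _ = C * ((2:ℝ) ^ (L - (j:ℝ))) ^ k := by rw [h7]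
        _ ≤ C * δ ^ (-s) := mul_le_mul_of_nonneg_left h8 hC0.le
  have hP1 : (1:ℝ) ≤ δ ^ (-s) := by
    rw [Real.rpow_neg hδ.le, one_le_inv_iff₀]
    constructor
    · positivity
    · calc δ ^ s ≤ 1 ^ s := Real.rpow_le_rpow hδ.le hδ1.le hs0.le
        _ = 1 := Real.one_rpow s
  have hPpos : (0:ℝ) < δ ^ (-s) := Real.rpow_pos_of_pos hδ _
  have hinner : ∀ J ∈ 𝒥, ((((Finset.Icc 1 m).biUnion fun j => W J j).card : ℕ) : ℝ)
      ≤ (m:ℝ) * (C * δ ^ (-s)) := by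
    intro J hJ
    calc ((((Finset.Icc 1 m).biUnion fun j => W J j).card : ℕ) : ℝ)
        ≤ ((∑ j ∈ Finset.Icc 1 m, (W J j).card : ℕ) : ℝ) := by
          exact_mod_cast Finset.card_biUnion_le
      _ = ∑ j ∈ Finset.Icc 1 m, ((W J j).card : ℝ) := by push_cast; rfl
      _ ≤ (Finset.Icc 1 m).card • (C * δ ^ (-s)) :=
          Finset.sum_le_card_nsmul _ _ _ (hWbound J hJ)
      _ = (m:ℝ) * (C * δ ^ (-s)) := by
          rw [Nat.card_Icc, nsmul_eq_mul]
          norm_num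
  have houter : ((𝒥.biUnion fun J => (Finset.Icc 1 m).biUnion fun j => W J j).card : ℝ)
      ≤ G * ((m:ℝ) * (C * δ ^ (-s))) := by
    calc ((𝒥.biUnion fun J => (Finset.Icc 1 m).biUnion fun j => W J j).card : ℝ)
        ≤ ((∑ J ∈ 𝒥, ((Finset.Icc 1 m).biUnion fun j => W J j).card : ℕ) : ℝ) := by
          exact_mod_cast Finset.card_biUnion_le
      _ = ∑ J ∈ 𝒥, ((((Finset.Icc 1 m).biUnion fun j => W J j).card : ℕ) : ℝ) := by
          push_cast; rfl
      _ ≤ 𝒥.card • ((m:ℝ) * (C * δ ^ (-s))) := Finset.sum_le_card_nsmul _ _ _ hinner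
      _ = G * ((m:ℝ) * (C * δ ^ (-s))) := by rw [nsmul_eq_mul]
  have hFcard : (F.card : ℝ) ≤ 1 + G * ((m:ℝ) * (C * δ ^ (-s))) := by
    have h1 : F.card ≤ (𝒥.biUnion fun J => (Finset.Icc 1 m).biUnion fun j => W J j).card + 1 :=
      Finset.card_insert_le _ _
    have h2 : (F.card : ℝ) ≤
        ((𝒥.biUnion fun J => (Finset.Icc 1 m).biUnion fun j => W J j).card : ℝ) + 1 := by
      exact_mod_cast h1
    linarith [houter]
  have h0 : (coverNum X δ : ℝ) ≤ (F.card : ℝ) := by exact_mod_cast coverNum_le F hcov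
  have hkey : 1 + G * ((m:ℝ) * (C * δ ^ (-s))) ≤ (1 + G * C) * (1 + L) * δ ^ (-s) := by
    have h5 : G * ((m:ℝ) * (C * δ ^ (-s))) ≤ G * (L * (C * δ ^ (-s))) := by
      apply mul_le_mul_of_nonneg_left _ hG0
      exact mul_le_mul_of_nonneg_right hmL (by positivity)
    nlinarith [h5, hP1, hPpos, mul_nonneg (mul_nonneg hG0 hC0.le) hPpos.le,
      mul_nonneg hL0.le hPpos.le,
      mul_nonneg (mul_nonneg (mul_nonneg hG0 hC0.le) hL0.le) hPpos.le]
  linarith [h0, hFcard, hkey]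

lemma tendsto_aux (B ε₁ : ℝ) (hε₁ : 0 < ε₁) :
    Tendsto (fun δ : ℝ => B * (1 + Real.logb 2 δ⁻¹) * δ ^ ε₁) (𝓝[>] (0:ℝ)) (𝓝 0) := by
  have h1 : Tendsto (fun y : ℝ => ε₁ * y) atTop atTop :=
    Tendsto.const_mul_atTop hε₁ tendsto_id
  have h2 : Tendsto (fun y : ℝ => Real.exp (-(ε₁ * y))) atTop (𝓝 0) :=
    Real.tendsto_exp_neg_atTop_nhds_zero.comp h1
  have h3 : Tendsto (fun y : ℝ => (ε₁ * y) * Real.exp (-(ε₁ * y))) atTop (𝓝 0) := by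
    have h4 := (Real.tendsto_pow_mul_exp_neg_atTop_nhds_zero 1).comp h1
    simpa only [pow_one, Function.comp_def] using h4
  have hout : Tendsto (fun y : ℝ => B * (1 + y / Real.log 2) * Real.exp (-(ε₁ * y)))
      atTop (𝓝 0) := by
    have h5 : Tendsto (fun y : ℝ => B * Real.exp (-(ε₁ * y)) +
        (B / (ε₁ * Real.log 2)) * ((ε₁ * y) * Real.exp (-(ε₁ * y)))) atTop
        (𝓝 (B * 0 + (B / (ε₁ * Real.log 2)) * 0)) :=
      (h2.const_mul B).add (h3.const_mul _)
    rw [mul_zero, mul_zero, add_zero] at h5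
    refine h5.congr fun y => ?_
    have hlog2 : Real.log 2 ≠ 0 := (Real.log_pos one_lt_two).ne'
    field_simp
  have hneg : Tendsto (fun δ : ℝ => -Real.log δ) (𝓝[>] (0:ℝ)) atTop :=
    tendsto_neg_atBot_atTop.comp Real.tendsto_log_nhdsGT_zero
  refine (hout.comp hneg).congr' ?_
  filter_upwards [self_mem_nhdsWithin] with δ hδ
  have hδ' : (0:ℝ) < δ := hδ
  show B * (1 + -Real.log δ / Real.log 2) * Real.exp (-(ε₁ * -Real.log δ))
      = B * (1 + Real.logb 2 δ⁻¹) * δ ^ ε₁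
  have he : Real.exp (-(ε₁ * -Real.log δ)) = δ ^ ε₁ := by
    rw [Real.rpow_def_of_pos hδ']
    congr 1
    ring
  rw [he, Real.logb, Real.log_inv]

/-- part of Lemma 6.3 / Proposition 6.2(ii): for `0 < s < k`,
`t = k/(k-s)`, `rᵢ = 2^{-i}`, `ℓᵢ = 2^{-ti}`, choose for each `(k+1)`-element
`J ⊆ {1,…,N}` and each `i ≥ 1` a maximal `ℓᵢ`-separated subset `X_{J,i}` of the sphere
`rᵢ S_J`; set `X_J = ⋃ᵢ X_{J,i} ∪ {0}` and `X = ⋃_J X_J`.  Then the lower and upper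
box-counting dimensions of `X` both equal `s = k(t-1)/t`. -/
theorem box_dims_of_sphere_nets (N k : ℕ) (hk : 1 ≤ k) (hkN : k + 1 ≤ N)
    (s : ℝ) (hs : s ∈ Set.Ioo 0 (k : ℝ)) (t : ℝ) (ht : t = (k : ℝ) / ((k : ℝ) - s))
    (XJ : Finset (Fin N) → ℕ → Finset (EuclideanSpace ℝ (Fin N)))
    (hsub : ∀ J : Finset (Fin N), J.card = k + 1 → ∀ i : ℕ, 1 ≤ i →
      ∀ p ∈ XJ J i, p ∈ sphereJ N J ((2 : ℝ) ^ (-(i : ℝ))))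
    (hsep : ∀ J : Finset (Fin N), J.card = k + 1 → ∀ i : ℕ, 1 ≤ i →
      ∀ p ∈ XJ J i, ∀ q ∈ XJ J i, p ≠ q → (2 : ℝ) ^ (-(t * i)) ≤ dist p q)
    (hmax : ∀ J : Finset (Fin N), J.card = k + 1 → ∀ i : ℕ, 1 ≤ i →
      ∀ T : Finset (EuclideanSpace ℝ (Fin N)),
        (∀ p ∈ T, p ∈ sphereJ N J ((2 : ℝ) ^ (-(i : ℝ)))) →
        (∀ p ∈ T, ∀ q ∈ T, p ≠ q → (2 : ℝ) ^ (-(t * i)) ≤ dist p q) →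
        T.card ≤ (XJ J i).card)
    (X : Set (EuclideanSpace ℝ (Fin N)))
    (hXdef : X = ⋃ J ∈ {J : Finset (Fin N) | J.card = k + 1},
      ((⋃ i ∈ {i : ℕ | 1 ≤ i}, (XJ J i : Set (EuclideanSpace ℝ (Fin N)))) ∪ {0})) :
    lowerBoxDim X = s ∧ upperBoxDim X = s := by
  classical
  obtain ⟨hs0, hsk⟩ := hs
  have hks : (0:ℝ) < (k:ℝ) - s := by linarith
  have htk : t * ((k:ℝ) - s) = k := by
    rw [ht]
    field_simp
  have ht1 : 1 < t := by
    rw [ht, lt_div_iff₀ hks]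
    linarith
  have hts : (t - 1) * k = s * t := by linear_combination htk
  -- a subset of size k+1
  obtain ⟨J₀, -, hJ₀⟩ :=
    Finset.exists_subset_card_eq (s := (Finset.univ : Finset (Fin N))) (n := k + 1)
      (by simpa using hkN)
  -- X inside unit ball
  have hXball : X ⊆ Metric.closedBall 0 1 := by
    intro x hx
    rw [hXdef] at hx
    simp only [Set.mem_iUnion, Set.mem_setOf_eq, Set.mem_union, Set.mem_singleton_iff,
      Finset.mem_coe, exists_prop] at hx
    obtain ⟨J, hJcard, hx'⟩ := hx
    rcases hx' with ⟨i, hi1, hxi⟩ | rfl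
    · have hxs := hsub J hJcard i hi1 x hxi
      have hnx : ‖x‖ = (2:ℝ) ^ (-(i:ℝ)) :=
        norm_of_mem_sphereJ (Real.rpow_pos_of_pos two_pos _).le hxs
      rw [mem_closedBall, dist_zero_right, hnx]
      exact Real.rpow_le_one_of_one_le_of_nonpos one_le_two (neg_nonpos.mpr (Nat.cast_nonneg i))
    · rw [mem_closedBall, dist_self]
      norm_num
  have hXsub : ∀ i : ℕ, 1 ≤ i → ↑(XJ J₀ i) ⊆ X := by
    intro i hi1 x hx
    rw [hXdef]
    simp only [Set.mem_iUnion, Set.mem_setOf_eq, Set.mem_union, Set.mem_singleton_iff,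
      Finset.mem_coe, exists_prop]
    exact ⟨J₀, hJ₀, Or.inl ⟨i, hi1, hx⟩⟩
  obtain ⟨c, hc0, hevl⟩ := cover_lower N k hk s t hs0 ht1 hts XJ J₀ hJ₀
    (hsep J₀ hJ₀) (hmax J₀ hJ₀) X hXsub hXball
  obtain ⟨B, hB0, hevu⟩ := cover_upper N k hk s t hs0 hsk ht1 hts htk XJ hsub hsep X hXdef
  -- the main tendsto
  have htend : Tendsto (fun δ : ℝ => Real.log (coverNum X δ) / (-Real.log δ))
      (𝓝[>] (0:ℝ)) (𝓝 s) := by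
    rw [Metric.tendsto_nhds]
    intro ε hε
    have hmin : 0 < min ε s := lt_min hε hs0
    set ε₁ : ℝ := min ε s / 2 with hε₁def
    have hε₁0 : 0 < ε₁ := by rw [hε₁def]; linarith
    have hε₁ε : ε₁ < ε := by
      have := min_le_left ε s
      rw [hε₁def]
      linarith
    have hε₁s : ε₁ < s := by
      have := min_le_right ε s
      rw [hε₁def]
      linarith
    have hevε3 : ∀ᶠ δ in 𝓝[>] (0:ℝ), δ ^ (-(s - ε₁)) ≤ c * δ ^ (-s) := by
      filter_upwards [ev_small (min 1 (c ^ ε₁⁻¹)) (by positivity)] with δ hδp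
      obtain ⟨hδ, hδa⟩ := hδp
      have hδc : δ < c ^ ε₁⁻¹ := lt_of_lt_of_le hδa (min_le_right _ _)
      have h1 : δ ^ ε₁ < c := by
        calc δ ^ ε₁ < (c ^ ε₁⁻¹) ^ ε₁ := Real.rpow_lt_rpow hδ.le hδc hε₁0
          _ = c := by
              rw [← Real.rpow_mul hc0.le, inv_mul_cancel₀ hε₁0.ne', Real.rpow_one]
      have h2 : δ ^ (-(s - ε₁)) = δ ^ (-s) * δ ^ ε₁ := by
        rw [← Real.rpow_add hδ]
        congr 1
        ring
      rw [h2]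
      calc δ ^ (-s) * δ ^ ε₁ ≤ δ ^ (-s) * c :=
            mul_le_mul_of_nonneg_left h1.le (by positivity)
        _ = c * δ ^ (-s) := mul_comm _ _
    have hevε4 : ∀ᶠ δ in 𝓝[>] (0:ℝ),
        B * (1 + Real.logb 2 δ⁻¹) * δ ^ (-s) ≤ δ ^ (-(s + ε₁)) := by
      filter_upwards [(tendsto_aux B ε₁ hε₁0).eventually_le_const one_pos,
        self_mem_nhdsWithin] with δ h1 hδm
      have hδ : (0:ℝ) < δ := hδm
      have h3 : B * (1 + Real.logb 2 δ⁻¹) ≤ δ ^ (-ε₁) := by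
        rw [Real.rpow_neg hδ.le, ← one_div (δ ^ ε₁), le_div_iff₀ (Real.rpow_pos_of_pos hδ _)]
        exact h1
      calc B * (1 + Real.logb 2 δ⁻¹) * δ ^ (-s) ≤ δ ^ (-ε₁) * δ ^ (-s) :=
            mul_le_mul_of_nonneg_right h3 (by positivity)
        _ = δ ^ (-(s + ε₁)) := by
            rw [← Real.rpow_add hδ]
            congr 1
            ring
    filter_upwards [hevl, hevu, hevε3, hevε4, ev_small 1 one_pos]
      with δ h1 h2 h3 h4 h5
    obtain ⟨hδ, hδ1⟩ := h5
    have hL'0 : 0 < -Real.log δ := by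
      have := Real.log_neg hδ hδ1
      linarith
    have hn1 : (1:ℝ) ≤ δ ^ (-(s - ε₁)) :=
      Real.one_le_rpow_of_pos_of_le_one_of_nonpos hδ hδ1.le (by linarith)
    have hnl : δ ^ (-(s - ε₁)) ≤ (coverNum X δ : ℝ) := le_trans h3 h1
    have hnu : (coverNum X δ : ℝ) ≤ δ ^ (-(s + ε₁)) := le_trans h2 h4
    have hn0 : (0:ℝ) < (coverNum X δ : ℝ) := by linarith
    have hlogl : (s - ε₁) * (-Real.log δ) ≤ Real.log (coverNum X δ : ℝ) := by
      have h6 := (Real.log_le_log_iff (by positivity) hn0).mpr hnl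
      rw [Real.log_rpow hδ] at h6
      have heq : (s - ε₁) * (-Real.log δ) = -(s - ε₁) * Real.log δ := by ring
      rw [heq]
      linarith
    have hlogu : Real.log (coverNum X δ : ℝ) ≤ (s + ε₁) * (-Real.log δ) := by
      have h6 := (Real.log_le_log_iff hn0 (by positivity)).mpr hnu
      rw [Real.log_rpow hδ] at h6
      have heq : (s + ε₁) * (-Real.log δ) = -(s + ε₁) * Real.log δ := by ring
      rw [heq]
      linarith
    have h6 : Real.log (coverNum X δ : ℝ) / (-Real.log δ) ≤ s + ε₁ := by
      rw [div_le_iff₀ hL'0]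
      exact hlogu
    have h7 : s - ε₁ ≤ Real.log (coverNum X δ : ℝ) / (-Real.log δ) := by
      rw [le_div_iff₀ hL'0]
      exact hlogl
    rw [Real.dist_eq, abs_lt]
    constructor <;> [linarith; linarith]
  exact ⟨htend.liminf_eq, htend.limsup_eq⟩
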